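/- Let m ∈ (0,1). There exists a constant c > 0 (depending on m only) such that for every a = (a₁,a₂) ∈ ℤ² with a₂ ≥ a₁ ≥ 0 and a ≠ 0, the simple random walk started at a satisfies E^a[ m^τ · 1_{τ<∞} · 1_{T=∞} ] ≥ (c/|a|) · G_m(0,a), where τ is the hitting time of 0, T is the time of the last visit to the line Δ = {(x,y) : y = −x} strictly before τ (T = ∞ if there is none), and |a| is the Euclidean norm of a. -/

import Mathlib

open scoped Classical BigOperators

noncomputable section

/-- A site of the square lattice `ℤ²`. -/
abbrev Site := ℤ × ℤ

/-- One step of the simple random walk: `v` is a nearest neighbour of `u`. -/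
def stepRel (u v : Site) : Prop :=
  v = u + (1, 0) ∨ v = u - (1, 0) ∨ v = u + (0, 1) ∨ v = u - (0, 1)

/-- Nearest-neighbour paths of length `n` started at `a` which hit `0` for the first
time at time `n`, and satisfy the additional constraint `P`.  Summing `(1/4)^n` over
these paths computes expectations of the simple random walk at its hitting time of `0`. -/
def hitPaths (a : Site) (n : ℕ) (P : (Fin (n + 1) → Site) → Prop) : Set (Fin (n + 1) → Site) :=
  {f | f 0 = a ∧ (∀ i : Fin n, stepRel (f i.castSucc) (f i.succ)) ∧
    f (Fin.last n) = 0 ∧ (∀ i : Fin n, f i.castSucc ≠ 0) ∧ P f}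

/-- `E^a[m^τ · 1_{τ<∞} · 1_P]`, where `τ` is the hitting time of `0` by the simple random
walk started at `a`, written as a sum over paths. -/
def hitExp (m : ℝ) (a : Site) (P : ∀ n : ℕ, (Fin (n + 1) → Site) → Prop) : ℝ :=
  ∑' n : ℕ, m ^ n * (1 / 4) ^ n * ((hitPaths a n (P n)).ncard : ℝ)

/-- The constraint `T = ∞`: the walk does not visit the line `Δ = {y = -x}` at any
time `< τ` (so there is no last visit of `Δ` before `τ`). -/
def noVisitDelta : ∀ n : ℕ, (Fin (n + 1) → Site) → Prop :=
  fun n f => ∀ i : Fin n, (f i.castSucc).2 ≠ -(f i.castSucc).1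

/-- `n`-step transition probabilities of the simple random walk on `ℤ²`. -/
def srwProb : ℕ → Site → Site → ℝ
  | 0, x, y => if x = y then 1 else 0
  | n + 1, x, y => (1 / 4) *
      (srwProb n (x + (1, 0)) y + srwProb n (x - (1, 0)) y +
        srwProb n (x + (0, 1)) y + srwProb n (x - (0, 1)) y)

/-- The massive Green function `G_m(x,y) = Σ_n m^n P^x(X_n = y)`. -/
def green (m : ℝ) (x y : Site) : ℝ := ∑' n : ℕ, m ^ n * srwProb n x y

/-- Euclidean norm of a site. -/
def siteEnorm (a : Site) : ℝ := Real.sqrt ((a.1 : ℝ) ^ 2 + (a.2 : ℝ) ^ 2)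

namespace SRWAux

/-! ### One-dimensional walk counts

In the rotated coordinates `u = x + y`, `v = x - y` the simple random walk on `ℤ²`
splits into two independent `±1` walks.  `W n k` counts the `±1`-paths of length `n`
from `k` to `0`; `F n k` counts those which moreover stay positive before time `n`
(first passage paths). -/

def W : ℕ → ℤ → ℕ
  | 0, k => if k = 0 then 1 else 0
  | n+1, k => W n (k-1) + W n (k+1)

def F : ℕ → ℤ → ℕ
  | 0, k => if k = 0 then 1 else 0
  | n+1, k => if k ≤ 0 then 0 else F n (k-1) + F n (k+1)

lemma W_le (n : ℕ) : ∀ k : ℤ, W n k ≤ 2 ^ n := by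
  induction n with
  | zero => intro k; simp [W]; split <;> simp
  | succ n ih => intro k; simp only [W, pow_succ]; have := ih (k-1); have := ih (k+1); omega

lemma W_eq_zero (n : ℕ) : ∀ k : ℤ, (n : ℤ) < |k| → W n k = 0 := by
  induction n with
  | zero => intro k h; simp [W]; intro hk; simp [hk] at h
  | succ n ih =>
    intro k h
    have h1 : (n : ℤ) < |k - 1| := by
      push_cast at h ⊢; cases abs_cases k <;> cases abs_cases (k-1) <;> omega
    have h2 : (n : ℤ) < |k + 1| := by
      push_cast at h ⊢; cases abs_cases k <;> cases abs_cases (k+1) <;> omega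
    simp [W, ih _ h1, ih _ h2]

lemma W_self (n : ℕ) : W n n = 1 := by
  induction n with
  | zero => simp [W]
  | succ n ih =>
    have : W n ((n : ℤ) + 1 + 1) = 0 := by
      apply W_eq_zero; rw [abs_of_nonneg (by positivity)]; omega
    simp only [W, Nat.cast_add, Nat.cast_one, add_sub_cancel_right, this, ih]

lemma W_pos (n : ℕ) : ∀ k : ℤ, |k| ≤ n → Even (n + k) → 1 ≤ W n k := by
  induction n with
  | zero =>
    intro k h _
    have : k = 0 := by cases abs_cases k <;> push_cast at h <;> omega
    simp [W, this]
  | succ n ih =>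
    intro k h hev
    rw [abs_le] at h
    obtain ⟨j, hj⟩ := hev
    push_cast at h hj
    rcases le_or_gt k 0 with hk | hk
    · have h1 : |k + 1| ≤ (n : ℤ) := by rw [abs_le]; omega
      have h2 : Even ((n : ℤ) + (k + 1)) := ⟨j, by omega⟩
      have := ih (k+1) h1 h2
      simp only [W]; omega
    · have h1 : |k - 1| ≤ (n : ℤ) := by rw [abs_le]; omega
      have h2 : Even ((n : ℤ) + (k - 1)) := ⟨j - 1, by omega⟩
      have := ih (k-1) h1 h2
      simp only [W]; omega

/-- The reflection identity for the bridge counts. -/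
lemma W_reflect (n : ℕ) : ∀ k : ℤ,
    ((n : ℤ) - k + 1) * W n (k-1) = ((n : ℤ) + k + 1) * W n (k+1) := by
  induction n with
  | zero =>
    intro k
    rcases eq_or_ne k 1 with rfl | h1
    · simp [W]
    · rcases eq_or_ne k (-1) with rfl | h2
      · norm_num [W]
      · have : W 0 (k-1) = 0 := by simp [W]; omega
        have : W 0 (k+1) = 0 := by simp [W]; omega
        simp_all
  | succ n ih =>
    intro k
    have hm := ih (k-1)
    have hp := ih (k+1)
    simp only [W]
    push_cast
    have e1 : k - 1 - 1 = k - 2 := by ring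
    have e2 : k - 1 + 1 = k := by ring
    have e3 : k + 1 - 1 = k := by ring
    have e4 : k + 1 + 1 = k + 2 := by ring
    rw [e1, e2] at hm
    rw [e3, e4] at hp
    rw [e1, e2, e3, e4]
    push_cast at hm hp ⊢
    nlinarith [hm, hp]

lemma F_le_W (n : ℕ) : ∀ k : ℤ, F n k ≤ W n k := by
  induction n with
  | zero => intro k; simp [F, W]
  | succ n ih =>
    intro k
    simp only [F, W]
    split
    · omega
    · have := ih (k-1); have := ih (k+1); omega

lemma F_zero_of_pos (n : ℕ) (hn : 1 ≤ n) : F n 0 = 0 := by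
  cases n with
  | zero => omega
  | succ n => simp [F]

/-- Kemperman's hitting time identity: `n · F n k = k · W n k`. -/
lemma kemperman (n : ℕ) (hn : 1 ≤ n) : ∀ k : ℤ, 1 ≤ k → (n : ℤ) * F n k = k * W n k := by
  induction n with
  | zero => omega
  | succ n ih =>
    intro k hk
    rcases Nat.eq_or_lt_of_le hn with h1 | h1
    · have hn0 : n = 0 := by omega
      subst hn0
      rcases eq_or_ne k 1 with rfl | hne
      · simp [F, W]
      · have hF : F 1 k = 0 := by
          simp only [F]
          split
          · rfl
          · simp [F]; omega
        have hW : W 1 k = 0 := by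
          simp only [W, W]; simp [W]; omega
        simp [hF, hW]
    · have hn' : 1 ≤ n := by omega
      have hm : (n : ℤ) * F n (k-1) = (k-1) * W n (k-1) := by
        rcases eq_or_lt_of_le hk with rfl | hk1
        · simp [F_zero_of_pos n hn']
        · exact ih hn' (k-1) (by omega)
      have hp : (n : ℤ) * F n (k+1) = (k+1) * W n (k+1) := ih hn' (k+1) (by omega)
      have hd := W_reflect n k
      have hFs : F (n+1) k = F n (k-1) + F n (k+1) := by
        simp only [F]; rw [if_neg (by omega)]
      have hWs : W (n+1) k = W n (k-1) + W n (k+1) := rfl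
      have hnpos : (0:ℤ) < n := by exact_mod_cast hn'
      rw [hFs, hWs]
      push_cast
      nlinarith [hm, hp, hd]

/-! ### Product formula for the transition probabilities -/

lemma srwProb_eq (n : ℕ) : ∀ x y : Site, srwProb n x y =
    (1/4 : ℝ)^n * ((W n ((y.1+y.2) - (x.1+x.2)) : ℕ) : ℝ)
      * ((W n ((y.1-y.2) - (x.1-x.2)) : ℕ) : ℝ) := by
  induction n with
  | zero =>
    intro x y
    simp only [srwProb, W, pow_zero, one_mul]
    by_cases h : x = y
    · subst h; simp
    · rw [if_neg h]
      rcases eq_or_ne (y.1 + y.2 - (x.1 + x.2)) 0 with h1 | h1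
      · rcases eq_or_ne (y.1 - y.2 - (x.1 - x.2)) 0 with h2 | h2
        · exfalso; apply h; apply Prod.ext <;> omega
        · simp [h1, h2]
      · simp [h1]
  | succ n ih =>
    intro x y
    have e1 := ih (x + (1,0)) y
    have e2 := ih (x - (1,0)) y
    have e3 := ih (x + (0,1)) y
    have e4 := ih (x - (0,1)) y
    simp only [Prod.fst_add, Prod.snd_add, Prod.fst_sub, Prod.snd_sub] at e1 e2 e3 e4
    norm_num at e1 e2 e3 e4
    set u := y.1 + y.2 - (x.1 + x.2) with hu
    set v := y.1 - y.2 - (x.1 - x.2) with hv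
    have a1 : y.1 + y.2 - (x.1 + 1 + x.2) = u - 1 := by omega
    have a2 : y.1 - y.2 - (x.1 + 1 - x.2) = v - 1 := by omega
    have b1 : y.1 + y.2 - (x.1 - 1 + x.2) = u + 1 := by omega
    have b2 : y.1 - y.2 - (x.1 - 1 - x.2) = v + 1 := by omega
    have c1 : y.1 + y.2 - (x.1 + (x.2 + 1)) = u - 1 := by omega
    have c2 : y.1 - y.2 - (x.1 - (x.2 + 1)) = v + 1 := by omega
    have d1 : y.1 + y.2 - (x.1 + (x.2 - 1)) = u + 1 := by omega
    have d2 : y.1 - y.2 - (x.1 - (x.2 - 1)) = v - 1 := by omega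
    rw [a1, a2] at e1
    rw [b1, b2] at e2
    rw [c1, c2] at e3
    rw [d1, d2] at e4
    show srwProb (n+1) x y = _
    simp only [srwProb, e1, e2, e3, e4, W]
    push_cast
    ring

/-! ### Finiteness and counting of hitting paths -/

def dirIdx : Site → Fin 4 := fun d =>
  if d = (1,0) then 0 else if d = (-1,0) then 1 else if d = (0,1) then 2 else 3

def decodeDir : Fin 4 → Site := ![(1,0),(-1,0),(0,1),(0,-1)]

lemma stepRel_decode {u v : Site} (h : stepRel u v) :
    v = u + decodeDir (dirIdx (v - u)) := by
  rcases h with h|h|h|h <;> subst h <;>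
    simp [dirIdx, decodeDir, sub_sub_cancel_left, Prod.ext_iff] <;> constructor <;> ring

lemma path_eq_of {n : ℕ} (f h : Fin (n+1) → Site) (h0 : f 0 = h 0)
    (hf : ∀ i : Fin n, stepRel (f i.castSucc) (f i.succ))
    (hh : ∀ i : Fin n, stepRel (h i.castSucc) (h i.succ))
    (he : ∀ i : Fin n, dirIdx (f i.succ - f i.castSucc) = dirIdx (h i.succ - h i.castSucc)) :
    f = h := by
  funext j
  induction j using Fin.induction with
  | zero => exact h0
  | succ i ih =>
    calc f i.succ = f i.castSucc + decodeDir (dirIdx (f i.succ - f i.castSucc)) :=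
          stepRel_decode (hf i)
      _ = h i.castSucc + decodeDir (dirIdx (h i.succ - h i.castSucc)) := by rw [he i, ih]
      _ = h i.succ := (stepRel_decode (hh i)).symm

lemma hitPaths_injOn {a : Site} {n : ℕ} {P : (Fin (n+1) → Site) → Prop} :
    Set.InjOn (fun (f : Fin (n+1) → Site) (i : Fin n) => dirIdx (f i.succ - f i.castSucc))
      (hitPaths a n P) := by
  rintro f ⟨f0, hf, -, -, -⟩ h ⟨h0, hh, -, -, -⟩ he
  exact path_eq_of f h (f0.trans h0.symm) hf hh (fun i => congrFun he i)

lemma hitPaths_finite (a : Site) (n : ℕ) (P : (Fin (n+1) → Site) → Prop) :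
    (hitPaths a n P).Finite :=
  Set.Finite.of_finite_image (Set.toFinite _) hitPaths_injOn

lemma hitPaths_ncard_le (a : Site) (n : ℕ) (P : (Fin (n+1) → Site) → Prop) :
    (hitPaths a n P).ncard ≤ 4 ^ n := by
  rw [← Set.ncard_image_of_injOn hitPaths_injOn]
  calc _ ≤ (Set.univ : Set (Fin n → Fin 4)).ncard :=
        Set.ncard_le_ncard (Set.subset_univ _) Set.finite_univ
    _ = 4 ^ n := by simp [Set.ncard_univ, Nat.card_eq_fintype_card]

/-- Extending a good path from a neighbour `b` of `a` by prepending `a`. -/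
lemma cons_mem {a b : Site} {n : ℕ} (hab : stepRel a b) (ha0 : a ≠ 0)
    (haD : a.2 ≠ -a.1) {g : Fin (n+1) → Site}
    (hg : g ∈ hitPaths b n (noVisitDelta n)) :
    Fin.cons a g ∈ hitPaths a (n+1) (noVisitDelta (n+1)) := by
  obtain ⟨g0, gstep, glast, gne, gD⟩ := hg
  refine ⟨Fin.cons_zero _ _, ?_, ?_, ?_, ?_⟩
  · intro i
    induction i using Fin.cases with
    | zero =>
      rw [Fin.castSucc_zero, Fin.cons_zero, Fin.cons_succ, g0]
      exact hab
    | succ j =>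
      rw [← Fin.succ_castSucc, Fin.cons_succ, Fin.cons_succ]
      exact gstep j
  · rw [← Fin.succ_last, Fin.cons_succ]
    exact glast
  · intro i
    induction i using Fin.cases with
    | zero => rw [Fin.castSucc_zero, Fin.cons_zero]; exact ha0
    | succ j => rw [← Fin.succ_castSucc, Fin.cons_succ]; exact gne j
  · intro i
    induction i using Fin.cases with
    | zero => rw [Fin.castSucc_zero, Fin.cons_zero]; exact haD
    | succ j => rw [← Fin.succ_castSucc, Fin.cons_succ]; exact gD j

/-- The slice of `hitPaths a (n+1)` consisting of paths whose second point is `b`. -/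
def slice (a b : Site) (n : ℕ) : Set (Fin (n+2) → Site) :=
  {f ∈ hitPaths a (n+1) (noVisitDelta (n+1)) | f 1 = b}

lemma cons_injective (a : Site) (n : ℕ) :
    Function.Injective (fun g : Fin (n+1) → Site => (Fin.cons a g : Fin (n+2) → Site)) := by
  intro g g' h
  funext i
  have := congrFun h i.succ
  simpa using this

lemma ncard_slice_ge {a b : Site} {n : ℕ} (hab : stepRel a b) (ha0 : a ≠ 0)
    (haD : a.2 ≠ -a.1) :
    (hitPaths b n (noVisitDelta n)).ncard ≤ (slice a b n).ncard := by
  have himg : (fun g : Fin (n+1) → Site => (Fin.cons a g : Fin (n+2) → Site)) ''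
      (hitPaths b n (noVisitDelta n)) ⊆ slice a b n := by
    rintro - ⟨g, hg, rfl⟩
    refine ⟨cons_mem hab ha0 haD hg, ?_⟩
    show (Fin.cons a g : Fin (n+2) → Site) 1 = b
    rw [← Fin.succ_zero_eq_one, Fin.cons_succ]
    exact hg.1
  calc (hitPaths b n (noVisitDelta n)).ncard
      = ((fun g : Fin (n+1) → Site => (Fin.cons a g : Fin (n+2) → Site)) ''
          (hitPaths b n (noVisitDelta n))).ncard :=
        (Set.ncard_image_of_injective _ (cons_injective a n)).symm
    _ ≤ (slice a b n).ncard :=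
        Set.ncard_le_ncard himg
          (Set.Finite.subset (hitPaths_finite a (n+1) _) (Set.sep_subset _ _))

lemma slice_subset (a b : Site) (n : ℕ) :
    slice a b n ⊆ hitPaths a (n+1) (noVisitDelta (n+1)) := Set.sep_subset _ _

lemma slice_disjoint (a : Site) {b b' : Site} (n : ℕ) (h : b ≠ b') :
    Disjoint (slice a b n) (slice a b' n) := by
  rw [Set.disjoint_left]
  rintro f ⟨-, h1⟩ ⟨-, h2⟩
  exact h (h1 ▸ h2 ▸ rfl)

/-- Lower bound on the number of first-hitting paths avoiding the diagonal `Δ`. -/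
lemma ncard_hitPaths_ge (n : ℕ) : ∀ a : Site,
    F n (a.1 + a.2) * W n (a.1 - a.2) ≤ (hitPaths a n (noVisitDelta n)).ncard := by
  induction n with
  | zero =>
    intro a
    by_cases ha : a = 0
    · subst ha
      have : (fun _ : Fin 1 => (0 : Site)) ∈ hitPaths 0 0 (noVisitDelta 0) :=
        ⟨rfl, fun i => i.elim0, rfl, fun i => i.elim0, fun i => i.elim0⟩
      have h1 : 1 ≤ (hitPaths (0:Site) 0 (noVisitDelta 0)).ncard := by
        rw [Nat.one_le_iff_ne_zero, ← Nat.pos_iff_ne_zero]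
        exact (Set.ncard_pos (hitPaths_finite _ _ _)).mpr ⟨_, this⟩
      calc F 0 (0 + 0) * W 0 (0 - 0) ≤ 1 := by simp [F, W]
        _ ≤ _ := h1
    · have : ¬((a.1 + a.2 = 0) ∧ (a.1 - a.2 = 0)) := by
        rintro ⟨h1, h2⟩
        apply ha
        have e1 : a.1 = 0 := by omega
        have e2 : a.2 = 0 := by omega
        rw [Prod.ext_iff, e1, e2]; exact ⟨rfl, rfl⟩
      rcases eq_or_ne (a.1 + a.2) 0 with h1 | h1
      · have h2 : a.1 - a.2 ≠ 0 := fun h2 => this ⟨h1, h2⟩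
        simp [F, W, h2]
      · simp [F, h1]
  | succ n ih =>
    intro a
    set s := a.1 + a.2 with hs
    set v := a.1 - a.2 with hv
    rcases le_or_gt s 0 with hs0 | hs0
    · have : F (n+1) s = 0 := by simp only [F]; rw [if_pos hs0]
      simp [this]
    · have ha0 : a ≠ 0 := by
        intro h; rw [h] at hs; simp only [Prod.fst_zero, Prod.snd_zero, add_zero] at hs; omega
      have haD : a.2 ≠ -a.1 := by intro h; omega
      have st1 : stepRel a (a + (1,0)) := Or.inl rfl
      have st2 : stepRel a (a - (1,0)) := Or.inr (Or.inl rfl)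
      have st3 : stepRel a (a + (0,1)) := Or.inr (Or.inr (Or.inl rfl))
      have st4 : stepRel a (a - (0,1)) := Or.inr (Or.inr (Or.inr rfl))
      have e1 := (ncard_slice_ge st1 ha0 haD).trans' (ih (a + (1,0)))
      have e2 := (ncard_slice_ge st2 ha0 haD).trans' (ih (a - (1,0)))
      have e3 := (ncard_slice_ge st3 ha0 haD).trans' (ih (a + (0,1)))
      have e4 := (ncard_slice_ge st4 ha0 haD).trans' (ih (a - (0,1)))
      have c1 : (a + (1,0)).1 + (a + (1,0)).2 = s + 1 := by simp [hs]; ring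
      have c2 : (a + (1,0)).1 - (a + (1,0)).2 = v + 1 := by simp [hv]; ring
      have d1 : (a - (1,0)).1 + (a - (1,0)).2 = s - 1 := by simp [hs]; ring
      have d2 : (a - (1,0)).1 - (a - (1,0)).2 = v - 1 := by simp [hv]; ring
      have f1 : (a + (0,1)).1 + (a + (0,1)).2 = s + 1 := by simp [hs]; ring
      have f2 : (a + (0,1)).1 - (a + (0,1)).2 = v - 1 := by simp [hv]; ring
      have g1 : (a - (0,1)).1 + (a - (0,1)).2 = s - 1 := by simp [hs]; ring
      have g2 : (a - (0,1)).1 - (a - (0,1)).2 = v + 1 := by simp [hv]; ring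
      rw [c1, c2] at e1
      rw [d1, d2] at e2
      rw [f1, f2] at e3
      rw [g1, g2] at e4
      have hfin : ∀ b, (slice a b n).Finite := fun b =>
        Set.Finite.subset (hitPaths_finite a (n+1) _) (slice_subset a b n)
      have hne12 : a + ((1:ℤ),(0:ℤ)) ≠ a - (1,0) := by
        intro h; rw [Prod.ext_iff] at h; simp at h; omega
      have hne13 : a + ((1:ℤ),(0:ℤ)) ≠ a + (0,1) := by
        intro h; rw [Prod.ext_iff] at h; simp at h
      have hne14 : a + ((1:ℤ),(0:ℤ)) ≠ a - (0,1) := by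
        intro h; rw [Prod.ext_iff] at h; simp at h
      have hne23 : a - ((1:ℤ),(0:ℤ)) ≠ a + (0,1) := by
        intro h; rw [Prod.ext_iff] at h; simp at h
      have hne24 : a - ((1:ℤ),(0:ℤ)) ≠ a - (0,1) := by
        intro h; rw [Prod.ext_iff] at h; simp at h
      have hne34 : a + ((0:ℤ),(1:ℤ)) ≠ a - (0,1) := by
        intro h; rw [Prod.ext_iff] at h; simp at h; omega
      have D12 : Disjoint (slice a (a+(1,0)) n) (slice a (a-(1,0)) n) := slice_disjoint a n hne12
      have D12_3 : Disjoint (slice a (a+(1,0)) n ∪ slice a (a-(1,0)) n) (slice a (a+(0,1)) n) :=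
        Set.disjoint_union_left.mpr ⟨slice_disjoint a n hne13, slice_disjoint a n hne23⟩
      have D123_4 : Disjoint (slice a (a+(1,0)) n ∪ slice a (a-(1,0)) n ∪ slice a (a+(0,1)) n)
          (slice a (a-(0,1)) n) :=
        Set.disjoint_union_left.mpr ⟨Set.disjoint_union_left.mpr
            ⟨slice_disjoint a n hne14, slice_disjoint a n hne24⟩, slice_disjoint a n hne34⟩
      have hu : (slice a (a+(1,0)) n ∪ slice a (a-(1,0)) n ∪ slice a (a+(0,1)) n ∪
          slice a (a-(0,1)) n).ncard =
          (slice a (a+(1,0)) n).ncard + (slice a (a-(1,0)) n).ncard +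
          (slice a (a+(0,1)) n).ncard + (slice a (a-(0,1)) n).ncard := by
        rw [Set.ncard_union_eq D123_4 (((hfin _).union (hfin _)).union (hfin _)) (hfin _),
          Set.ncard_union_eq D12_3 ((hfin _).union (hfin _)) (hfin _),
          Set.ncard_union_eq D12 (hfin _) (hfin _)]
      have hsub : (slice a (a+(1,0)) n ∪ slice a (a-(1,0)) n ∪ slice a (a+(0,1)) n ∪
          slice a (a-(0,1)) n) ⊆ hitPaths a (n+1) (noVisitDelta (n+1)) := by
        refine Set.union_subset (Set.union_subset (Set.union_subset ?_ ?_) ?_) ?_ <;>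
          exact slice_subset a _ n
      have hcard := Set.ncard_le_ncard hsub (hitPaths_finite a (n+1) _)
      rw [hu] at hcard
      have hF : F (n+1) s = F n (s-1) + F n (s+1) := by
        simp only [F]; rw [if_neg (by omega)]
      have hW : W (n+1) v = W n (v-1) + W n (v+1) := rfl
      calc F (n+1) s * W (n+1) v
          = F n (s+1) * W n (v+1) + F n (s-1) * W n (v-1)
            + F n (s+1) * W n (v-1) + F n (s-1) * W n (v+1) := by rw [hF, hW]; ring
        _ ≤ (slice a (a+(1,0)) n).ncard + (slice a (a-(1,0)) n).ncard +
            (slice a (a+(0,1)) n).ncard + (slice a (a-(0,1)) n).ncard := by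
            gcongr
        _ ≤ _ := hcard

end SRWAux

set_option maxHeartbeats 1000000 in
open SRWAux in
/-- Lower bound on the restricted massive hitting expectation in terms of the massive
Green function: `E^a[m^τ 1_{τ<∞} 1_{T=∞}] ≥ (c/|a|) G_m(0,a)`. -/
theorem srw_massive_hitting_lower_bound
    (m : ℝ) (hm : m ∈ Set.Ioo (0 : ℝ) 1) :
    ∃ c > (0 : ℝ), ∀ a : Site, a.1 ≤ a.2 → 0 ≤ a.1 → a ≠ 0 →
      (c / siteEnorm a) * green m (0, 0) a ≤ hitExp m a noVisitDelta := by
  obtain ⟨hm0, hm1⟩ := hm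
  -- choose `K` with `m^K ≤ m/4` and `M ≥ 1` with `m^M ≤ (1-m)/2`
  obtain ⟨K, hK⟩ := exists_pow_lt_of_lt_one (by linarith : (0:ℝ) < m/4) hm1
  obtain ⟨M0, hM0⟩ := exists_pow_lt_of_lt_one (by linarith : (0:ℝ) < (1-m)/2) hm1
  set M : ℕ := M0 + 1 with hMdef
  have hM : m ^ M ≤ (1-m)/2 := by
    calc m ^ M = m ^ M0 * m := by rw [hMdef, pow_succ]
      _ ≤ m ^ M0 * 1 := by nlinarith [pow_pos hm0 M0]
      _ ≤ (1-m)/2 := by rw [mul_one]; exact le_of_lt hM0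
  have hM1 : (1:ℝ) ≤ (M:ℝ) := by exact_mod_cast (by omega : 1 ≤ M)
  have hKM : (0:ℝ) < 2 * ((K:ℝ) + (M:ℝ)) := by positivity
  refine ⟨1 / (2 * ((K:ℝ) + (M:ℝ))), by positivity, ?_⟩
  intro a h12 h01 ha0
  set s : ℤ := a.1 + a.2 with hsdef
  set v : ℤ := a.1 - a.2 with hvdef
  have hs1 : 1 ≤ s := by
    rcases eq_or_ne a.1 0 with h | h
    · have : a.2 ≠ 0 := by
        intro h2; apply ha0; rw [Prod.ext_iff, h, h2]; exact ⟨rfl, rfl⟩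
      omega
    · omega
  set S : ℕ := s.toNat with hSdef
  have hSs : (S : ℤ) = s := Int.toNat_of_nonneg (by omega)
  have hS1 : 1 ≤ S := by omega
  set N : ℕ := K * S + M with hNdef
  have hN1 : 1 ≤ N := by
    have : 1 ≤ M := by omega
    omega
  -- the term sequences
  set g : ℕ → ℝ := fun n => m ^ n * (1/4)^n * ((W n s : ℕ) : ℝ) * ((W n v : ℕ) : ℝ) with hgdef
  set h' : ℕ → ℝ := fun n => m ^ n * (1/4)^n * ((F n s : ℕ) : ℝ) * ((W n v : ℕ) : ℝ) with h'def
  have hg_nonneg : ∀ n, 0 ≤ g n := by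
    intro n; rw [hgdef]; positivity
  have hh'_nonneg : ∀ n, 0 ≤ h' n := by
    intro n; rw [h'def]; positivity
  have hg_le : ∀ n, g n ≤ m ^ n := by
    intro n
    have w1 : ((W n s : ℕ) : ℝ) ≤ 2 ^ n := by exact_mod_cast W_le n s
    have w2 : ((W n v : ℕ) : ℝ) ≤ 2 ^ n := by exact_mod_cast W_le n v
    have : ((W n s : ℕ) : ℝ) * ((W n v : ℕ) : ℝ) ≤ 4 ^ n := by
      calc ((W n s : ℕ) : ℝ) * ((W n v : ℕ) : ℝ) ≤ 2^n * 2^n := by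
            apply mul_le_mul w1 w2 (by positivity) (by positivity)
        _ = 4 ^ n := by rw [← mul_pow]; norm_num
    calc g n = m^n * (1/4)^n * (((W n s : ℕ) : ℝ) * ((W n v : ℕ) : ℝ)) := by
          rw [hgdef]; ring
      _ ≤ m^n * (1/4)^n * 4^n := by
          apply mul_le_mul_of_nonneg_left this (by positivity)
      _ = m^n := by rw [mul_assoc, ← mul_pow]; norm_num
  have hsum_geom : Summable (fun n : ℕ => m ^ n) :=
    summable_geometric_of_lt_one hm0.le hm1
  have hsum_g : Summable g :=
    Summable.of_nonneg_of_le hg_nonneg hg_le hsum_geom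
  have hh'_le_g : ∀ n, h' n ≤ g n := by
    intro n
    rw [h'def, hgdef]
    have : ((F n s : ℕ) : ℝ) ≤ ((W n s : ℕ) : ℝ) := by exact_mod_cast F_le_W n s
    have h0 : (0:ℝ) ≤ m ^ n * (1/4)^n := by positivity
    have h1 : (0:ℝ) ≤ ((W n v : ℕ) : ℝ) := by positivity
    calc m ^ n * (1/4)^n * ((F n s : ℕ) : ℝ) * ((W n v : ℕ) : ℝ)
        ≤ m ^ n * (1/4)^n * ((W n s : ℕ) : ℝ) * ((W n v : ℕ) : ℝ) := by
          apply mul_le_mul_of_nonneg_right _ h1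
          exact mul_le_mul_of_nonneg_left this h0
      _ = _ := rfl
  have hsum_h' : Summable h' :=
    Summable.of_nonneg_of_le hh'_nonneg (fun n => (hh'_le_g n).trans (hg_le n)) hsum_geom
  -- green in terms of g
  have hgreen : green m ((0,0) : Site) a = ∑' n, g n := by
    unfold green
    apply tsum_congr
    intro n
    rw [srwProb_eq n ((0,0) : Site) a]
    simp only [Prod.fst_zero, Prod.snd_zero]
    rw [hgdef]
    norm_num [hsdef, hvdef]
    ring
  -- hitExp dominates the sum of h'
  have hhit_terms : ∀ n, h' n ≤ m ^ n * (1 / 4) ^ n * ((hitPaths a n (noVisitDelta n)).ncard : ℝ) := by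
    intro n
    have hcount : ((F n s * W n v : ℕ) : ℝ) ≤ ((hitPaths a n (noVisitDelta n)).ncard : ℝ) := by
      exact_mod_cast ncard_hitPaths_ge n a
    push_cast at hcount
    calc h' n = m ^ n * (1/4)^n * (((F n s : ℕ) : ℝ) * ((W n v : ℕ) : ℝ)) := by
          rw [h'def]; ring
      _ ≤ m ^ n * (1/4)^n * ((hitPaths a n (noVisitDelta n)).ncard : ℝ) := by
          apply mul_le_mul_of_nonneg_left hcount (by positivity)
  have hhit_le : ∀ n, m ^ n * (1 / 4) ^ n * ((hitPaths a n (noVisitDelta n)).ncard : ℝ) ≤ m ^ n := by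
    intro n
    have : ((hitPaths a n (noVisitDelta n)).ncard : ℝ) ≤ 4 ^ n := by
      exact_mod_cast hitPaths_ncard_le a n (noVisitDelta n)
    calc m ^ n * (1 / 4) ^ n * ((hitPaths a n (noVisitDelta n)).ncard : ℝ)
        ≤ m ^ n * (1 / 4) ^ n * 4 ^ n := by
          apply mul_le_mul_of_nonneg_left this (by positivity)
      _ = m ^ n := by rw [mul_assoc, ← mul_pow]; norm_num
  have hhit_nonneg : ∀ n, 0 ≤ m ^ n * (1 / 4) ^ n * ((hitPaths a n (noVisitDelta n)).ncard : ℝ) := by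
    intro n; positivity
  have hsum_hit : Summable (fun n => m ^ n * (1 / 4) ^ n * ((hitPaths a n (noVisitDelta n)).ncard : ℝ)) :=
    Summable.of_nonneg_of_le hhit_nonneg hhit_le hsum_geom
  have hhit_ge : ∑' n, h' n ≤ hitExp m a noVisitDelta := by
    unfold hitExp
    exact Summable.tsum_le_tsum hhit_terms hsum_h' hsum_hit
  -- single-term lower bound for green
  have hWS : W S s = 1 := by rw [← hSs]; exact W_self S
  have hWSv : 1 ≤ W S v := by
    apply W_pos
    · rw [hSs, abs_le]; omega
    · exact ⟨a.1, by omega⟩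
  have hgS : (m/4) ^ S ≤ g S := by
    have w1 : (1:ℝ) ≤ ((W S s : ℕ) : ℝ) := by rw [hWS]; norm_num
    have w2 : (1:ℝ) ≤ ((W S v : ℕ) : ℝ) := by exact_mod_cast hWSv
    have w3 : (1:ℝ) ≤ ((W S s : ℕ) : ℝ) * ((W S v : ℕ) : ℝ) := by nlinarith
    calc (m/4 : ℝ) ^ S = (m ^ S * (1/4)^S) * 1 := by
          rw [mul_one, div_pow, one_div, inv_pow, div_eq_mul_inv]
      _ ≤ (m ^ S * (1/4)^S) * (((W S s : ℕ) : ℝ) * ((W S v : ℕ) : ℝ)) := by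
          apply mul_le_mul_of_nonneg_left w3 (by positivity)
      _ = g S := by rw [hgdef]; ring
  have hG_ge_gS : g S ≤ ∑' n, g n := Summable.le_tsum hsum_g S (fun i _ => hg_nonneg i)
  -- tail estimate
  have htail : ∑' n : ℕ, g (n + (N+1)) ≤ (1/2) * (m/4)^S := by
    have hterm : ∀ n : ℕ, g (n + (N+1)) ≤ m ^ (n + (N+1)) := fun n => hg_le _
    have hsum1 : Summable (fun n : ℕ => g (n + (N+1))) := by
      exact (summable_nat_add_iff (N+1)).mpr hsum_g
    have hsum2 : Summable (fun n : ℕ => m ^ (n + (N+1))) := by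
      exact (summable_nat_add_iff (N+1)).mpr hsum_geom
    have h1 : ∑' n : ℕ, g (n + (N+1)) ≤ ∑' n : ℕ, m ^ (n + (N+1)) :=
      Summable.tsum_le_tsum hterm hsum1 hsum2
    have h2 : ∑' n : ℕ, m ^ (n + (N+1)) = m ^ (N+1) * (1 - m)⁻¹ := by
      have : ∀ n : ℕ, m ^ (n + (N+1)) = m ^ (N+1) * m ^ n := by
        intro n; rw [pow_add]; ring
      rw [tsum_congr this, tsum_mul_left, tsum_geometric_of_lt_one hm0.le hm1]
    have h3 : m ^ (N+1) * (1 - m)⁻¹ ≤ (1/2) * (m/4)^S := by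
      have hmN : m ^ (N+1) ≤ (m/4)^S * ((1-m)/2) := by
        have e : m ^ (N+1) = (m^K)^S * m^M * m := by
          rw [hNdef]; rw [← pow_mul, ← pow_add, ← pow_succ]
        rw [e]
        have b1 : (m^K)^S ≤ (m/4)^S := by
          apply pow_le_pow_left₀ (by positivity) hK.le
        have h1m : (0:ℝ) ≤ (1-m)/2 := by linarith
        calc (m^K)^S * m^M * m ≤ (m/4)^S * ((1-m)/2) * 1 := by
              apply mul_le_mul _ hm1.le hm0.le (mul_nonneg (by positivity) h1m)
              apply mul_le_mul b1 hM (by positivity) (by positivity)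
          _ = (m/4)^S * ((1-m)/2) := by ring
      calc m ^ (N+1) * (1 - m)⁻¹ ≤ ((m/4)^S * ((1-m)/2)) * (1 - m)⁻¹ := by
            apply mul_le_mul_of_nonneg_right hmN
            have h1m' : (0:ℝ) < 1 - m := by linarith
            positivity
        _ = (1/2) * (m/4)^S * ((1-m) * (1-m)⁻¹) := by ring
        _ = (1/2) * (m/4)^S := by
            rw [mul_inv_cancel₀ (by linarith), mul_one]
    linarith
  -- partial sum of g dominates half of green
  have hsplit : ∑ n ∈ Finset.range (N+1), g n + ∑' n : ℕ, g (n + (N+1)) = ∑' n, g n :=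
    Summable.sum_add_tsum_nat_add (N+1) hsum_g
  have hhalf : (1/2) * (∑' n, g n) ≤ ∑ n ∈ Finset.range (N+1), g n := by
    have : ∑' n : ℕ, g (n + (N+1)) ≤ (1/2) * (∑' n, g n) := by
      calc ∑' n : ℕ, g (n + (N+1)) ≤ (1/2) * (m/4)^S := htail
        _ ≤ (1/2) * g S := by linarith [hgS]
        _ ≤ (1/2) * (∑' n, g n) := by linarith [hG_ge_gS]
    linarith
  -- termwise comparison on the initial segment
  have hterm_cmp : ∀ n ∈ Finset.range (N+1), (s:ℝ) * g n ≤ (N:ℝ) * h' n := by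
    intro n hn
    rw [Finset.mem_range] at hn
    rcases Nat.eq_zero_or_pos n with rfl | hnpos
    · have : g 0 = 0 := by
        rw [hgdef]
        have : W 0 s = 0 := by simp [W]; omega
        simp [this]
      rw [this]
      have : 0 ≤ (N:ℝ) * h' 0 := by positivity
      simpa using this
    · have hk := kemperman n hnpos s (by omega)
      have hkR : (n:ℝ) * ((F n s : ℕ) : ℝ) = (s:ℝ) * ((W n s : ℕ) : ℝ) := by
        exact_mod_cast hk
      have e1 : (s:ℝ) * g n = m ^ n * (1/4)^n * ((s:ℝ) * ((W n s : ℕ) : ℝ)) * ((W n v : ℕ) : ℝ) := by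
        rw [hgdef]; ring
      have e2 : (n:ℝ) * h' n = m ^ n * (1/4)^n * ((n:ℝ) * ((F n s : ℕ) : ℝ)) * ((W n v : ℕ) : ℝ) := by
        rw [h'def]; ring
      have e3 : (s:ℝ) * g n = (n:ℝ) * h' n := by rw [e1, e2, hkR]
      rw [e3]
      apply mul_le_mul_of_nonneg_right _ (hh'_nonneg n)
      exact_mod_cast Nat.le_of_lt_succ hn
  have hsum_cmp : (s:ℝ) * ∑ n ∈ Finset.range (N+1), g n ≤ (N:ℝ) * ∑ n ∈ Finset.range (N+1), h' n := by
    rw [Finset.mul_sum, Finset.mul_sum]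
    exact Finset.sum_le_sum hterm_cmp
  have hpartial_le : ∑ n ∈ Finset.range (N+1), h' n ≤ ∑' n, h' n :=
    Summable.sum_le_tsum (Finset.range (N+1)) (fun i _ => hh'_nonneg i) hsum_h'
  -- putting it together
  have hNpos : (0:ℝ) < (N:ℝ) := by exact_mod_cast hN1
  have hspos : (0:ℝ) < (s:ℝ) := by exact_mod_cast hs1
  have hG_nonneg : 0 ≤ ∑' n, g n := tsum_nonneg hg_nonneg
  have key : (s:ℝ) / (2 * N) * (∑' n, g n) ≤ hitExp m a noVisitDelta := by
    rw [div_mul_eq_mul_div, div_le_iff₀ (by positivity)]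
    calc (s:ℝ) * (∑' n, g n)
        = 2 * ((s:ℝ) * ((1/2) * (∑' n, g n))) := by ring
      _ ≤ 2 * ((s:ℝ) * ∑ n ∈ Finset.range (N+1), g n) := by
          have := mul_le_mul_of_nonneg_left hhalf hspos.le
          linarith
      _ ≤ 2 * ((N:ℝ) * ∑ n ∈ Finset.range (N+1), h' n) := by linarith [hsum_cmp]
      _ ≤ 2 * ((N:ℝ) * ∑' n, h' n) := by
          have := mul_le_mul_of_nonneg_left hpartial_le hNpos.le
          linarith
      _ ≤ 2 * ((N:ℝ) * hitExp m a noVisitDelta) := by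
          have := mul_le_mul_of_nonneg_left hhit_ge hNpos.le
          linarith
      _ = hitExp m a noVisitDelta * (2 * N) := by ring
  -- compare s/(2N) with the constant
  have hNle : (N:ℝ) ≤ ((K:ℝ) + (M:ℝ)) * (s:ℝ) := by
    have : (N:ℝ) = K * S + M := by rw [hNdef]; push_cast; ring
    rw [this]
    have hSR : (S:ℝ) = (s:ℝ) := by exact_mod_cast hSs
    rw [hSR]
    have h1 : (1:ℝ) ≤ (s:ℝ) := by exact_mod_cast hs1
    have hK0 : (0:ℝ) ≤ (K:ℝ) := by positivity
    have hM0' : (0:ℝ) ≤ (M:ℝ) := by positivity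
    nlinarith
  have hconst : 1 / (2 * ((K:ℝ) + (M:ℝ))) ≤ (s:ℝ) / (2 * N) := by
    rw [div_le_div_iff₀ hKM (by linarith [hNpos] : (0:ℝ) < 2*(N:ℝ))]
    have : (2:ℝ) * N ≤ 2 * (((K:ℝ)+(M:ℝ)) * s) := by linarith
    calc (1:ℝ) * (2 * N) = 2 * (N:ℝ) := by ring
      _ ≤ 2 * (((K:ℝ)+(M:ℝ)) * s) := this
      _ = (s:ℝ) * (2 * ((K:ℝ) + (M:ℝ))) := by ring
  -- enorm a ≥ 1
  have henorm : 1 ≤ siteEnorm a := by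
    unfold siteEnorm
    rw [show (1:ℝ) = Real.sqrt 1 by rw [Real.sqrt_one]]
    apply Real.sqrt_le_sqrt
    have : (1:ℤ) ≤ a.1^2 + a.2^2 := by nlinarith
    have := (by exact_mod_cast this : (1:ℝ) ≤ (a.1:ℝ)^2 + (a.2:ℝ)^2)
    linarith
  have hc_nonneg : (0:ℝ) ≤ 1 / (2 * ((K:ℝ) + (M:ℝ))) := by positivity
  calc 1 / (2 * ((K:ℝ) + (M:ℝ))) / siteEnorm a * green m ((0,0) : Site) a
      ≤ 1 / (2 * ((K:ℝ) + (M:ℝ))) * green m ((0,0) : Site) a := by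
        apply mul_le_mul_of_nonneg_right _ (by rw [hgreen]; exact hG_nonneg)
        exact div_le_self hc_nonneg henorm
    _ ≤ (s:ℝ) / (2 * N) * green m ((0,0) : Site) a := by
        apply mul_le_mul_of_nonneg_right hconst (by rw [hgreen]; exact hG_nonneg)
    _ ≤ hitExp m a noVisitDelta := by rw [hgreen]; exact key
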